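/- Let θ : ℝ^m → ℝ ∪ {+∞} be a proper lower semicontinuous convex function and let x̄, v̄, Ψ, Λ(x̄) be as in the variational-system setting with v̄ ∈ Λ(x̄). Then the solution map S is isolatedly calm at ((0,0),(x̄,v̄)) if and only if the only pair (ξ,η) ∈ ℝ^n × ℝ^m satisfying ∇ₓΨ(x̄,v̄)ξ + ∇Φ(x̄)*η = 0 and η ∈ (D∂θ)(z̄,v̄)(∇Φ(x̄)ξ) is (ξ,η) = (0,0); moreover, in that case there is a neighborhood V of (x̄,v̄) with S(0,0) ∩ V = {(x̄,v̄)}. -/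

import Mathlib

open Filter Topology Set RealInnerProductSpace

noncomputable section

abbrev Ev (k : ℕ) := EuclideanSpace ℝ (Fin k)

/-- The Bouligand–Severi tangent cone to a set `s` at `x`. -/
def tcone {E : Type*} [NormedAddCommGroup E] [NormedSpace ℝ E] (s : Set E) (x : E) : Set E :=
  {w | ∃ (z : ℕ → E) (c : ℕ → ℝ), (∀ k, z k ∈ s) ∧ (∀ k, 0 ≤ c k) ∧
      Tendsto z atTop (𝓝 x) ∧ Tendsto (fun k => c k • (z k - x)) atTop (𝓝 w)}

/-- The data of a convex piecewise linear (CPWL) extended-real-valued function on `ℝ^m`: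
`θ(z) = max_i (⟨a i, z⟩ - al i)` on the polyhedron `dom θ = {z | ⟨d i, z⟩ ≤ be i ∀ i}`,
and `θ(z) = +∞` outside of it. -/
structure CPWL (m : ℕ) where
  l : ℕ
  p : ℕ
  hl : 0 < l
  a : Fin l → Ev m
  al : Fin l → ℝ
  d : Fin p → Ev m
  be : Fin p → ℝ
  dom_nonempty : ∃ z : Ev m, ∀ i, ⟪d i, z⟫ ≤ be i

namespace CPWL

variable {m : ℕ} (θ : CPWL m)

/-- The (polyhedral) domain of the CPWL function. -/
def dom : Set (Ev m) := {z | ∀ i, ⟪θ.d i, z⟫ ≤ θ.be i}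

/-- The real value `max_i (⟨a i, z⟩ - al i)` of the CPWL function (meaningful on its domain). -/
def val (z : Ev m) : ℝ := ⨆ i : Fin θ.l, (⟪θ.a i, z⟫ - θ.al i)

/-- The CPWL function as an extended-real-valued function. -/
def eval (z : Ev m) : EReal :=
  @ite _ (z ∈ θ.dom) (Classical.propDecidable _) ((θ.val z : ℝ) : EReal) ⊤

/-- The subdifferential (of convex analysis) of the CPWL function. -/
def subdiff (z : Ev m) : Set (Ev m) :=
  {v | z ∈ θ.dom ∧ ∀ z' ∈ θ.dom, ⟪v, z' - z⟫ ≤ θ.val z' - θ.val z}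

/-- Active indices `K(z)` of the max-representation. -/
def Kact (z : Ev m) : Set (Fin θ.l) := {i | θ.val z = ⟪θ.a i, z⟫ - θ.al i}

/-- Active indices `I(z)` of the domain constraints. -/
def Iact (z : Ev m) : Set (Fin θ.p) := {i | ⟪θ.d i, z⟫ = θ.be i}

/-- The critical cone `𝒦(z̄,v̄) = {w ∈ T(z̄; dom θ) : ⟨v̄,w⟩ = θ′(z̄;w)}`. -/
def crit (zb vb : Ev m) : Set (Ev m) :=
  {w | w ∈ tcone θ.dom zb ∧
    Tendsto (fun t : ℝ => (θ.val (zb + t • w) - θ.val zb) / t) (𝓝[>] (0 : ℝ))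
      (𝓝 ⟪vb, w⟫)}

/-- The graph of the subdifferential mapping. -/
def gph : Set (Ev m × Ev m) := {zv | zv.2 ∈ θ.subdiff zv.1}

/-- The graphical derivative `(D∂θ)(z̄,v̄)(u)`. -/
def Dsub (zb vb u : Ev m) : Set (Ev m) := {w | (u, w) ∈ tcone θ.gph (zb, vb)}

/-- The regular coderivative `(D̂*∂θ)(z̄,v̄)(u)`. -/
def Dhat (zb vb u : Ev m) : Set (Ev m) :=
  {w | ∀ h ∈ tcone θ.gph (zb, vb), ⟪w, h.1⟫ - ⟪u, h.2⟫ ≤ 0}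

end CPWL

section VarSys

variable {n m : ℕ}

/-- The adjoint `∇Φ(x)*` of the Jacobian of `Φ` at `x`. -/
def adjD (Φ : Ev n → Ev m) (x : Ev n) : Ev m →L[ℝ] Ev n :=
  ContinuousLinearMap.adjoint (fderiv ℝ Φ x)

/-- `Ψ(x,v) = f(x) + ∇Φ(x)* v`. -/
def Psi (f : Ev n → Ev n) (Φ : Ev n → Ev m) (x : Ev n) (v : Ev m) : Ev n :=
  f x + adjD Φ x v

/-- The partial Jacobian `∇ₓΨ(x̄,v̄)`. -/
def gradxPsi (f : Ev n → Ev n) (Φ : Ev n → Ev m) (xb : Ev n) (vb : Ev m) :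
    Ev n →L[ℝ] Ev n :=
  fderiv ℝ (fun x => Psi f Φ x vb) xb

/-- The Lagrange multiplier set `Λ(x̄)` of the variational system. -/
def Lam (f : Ev n → Ev n) (Φ : Ev n → Ev m) (θ : CPWL m) (xb : Ev n) : Set (Ev m) :=
  {v | Psi f Φ xb v = 0 ∧ v ∈ θ.subdiff (Φ xb)}

/-- `v̄` is a critical multiplier for the variational system. -/
def IsCritical (f : Ev n → Ev n) (Φ : Ev n → Ev m) (θ : CPWL m) (xb : Ev n) (vb : Ev m) :
    Prop :=
  ∃ ξ : Ev n, ξ ≠ 0 ∧ ∃ w ∈ θ.Dsub (Φ xb) vb (fderiv ℝ Φ xb ξ),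
    gradxPsi f Φ xb vb ξ + adjD Φ xb w = 0

/-- The solution map of the canonically perturbed variational system. -/
def Smap (f : Ev n → Ev n) (Φ : Ev n → Ev m) (θ : CPWL m) (p₁ : Ev n) (p₂ : Ev m) :
    Set (Ev n × Ev m) :=
  {xv | Psi f Φ xv.1 xv.2 = p₁ ∧ xv.2 ∈ θ.subdiff (Φ xv.1 + p₂)}

end VarSys

section General

variable {n m : ℕ}

/-- The subdifferential of a general extended-real-valued function. -/
def subdiffE (θ : Ev m → EReal) (z : Ev m) : Set (Ev m) :=
  {v | ∀ z', ((⟪v, z' - z⟫ : ℝ) : EReal) ≤ θ z' - θ z}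

/-- The graph of the subdifferential of a general extended-real-valued function. -/
def gphE (θ : Ev m → EReal) : Set (Ev m × Ev m) := {zv | zv.2 ∈ subdiffE θ zv.1}

/-- The graphical derivative of the subdifferential, general case. -/
def DsubE (θ : Ev m → EReal) (zb vb u : Ev m) : Set (Ev m) :=
  {w | (u, w) ∈ tcone (gphE θ) (zb, vb)}

/-- The Lagrange multiplier set, general case. -/
def LamE (f : Ev n → Ev n) (Φ : Ev n → Ev m) (θ : Ev m → EReal) (xb : Ev n) :
    Set (Ev m) :=
  {v | Psi f Φ xb v = 0 ∧ v ∈ subdiffE θ (Φ xb)}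

/-- The solution map of the canonically perturbed variational system, general case. -/
def SmapE (f : Ev n → Ev n) (Φ : Ev n → Ev m) (θ : Ev m → EReal) (p₁ : Ev n)
    (p₂ : Ev m) : Set (Ev n × Ev m) :=
  {xv | Psi f Φ xv.1 xv.2 = p₁ ∧ xv.2 ∈ subdiffE θ (Φ xv.1 + p₂)}

end General

section Composite

variable {n m : ℕ}

/-- The gradient `∇ₓL(·,v)` of the Lagrangian `L(x,v) = φ₀(x) + ⟨Φ(x),v⟩`. -/
def gradL (φ₀ : Ev n → ℝ) (Φ : Ev n → Ev m) (v : Ev m) (x : Ev n) : Ev n :=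
  gradient (fun y => φ₀ y + ⟪Φ y, v⟫) x

/-- The Hessian `∇²ₓₓL(x̄,v)` as a linear operator. -/
def HessOp (φ₀ : Ev n → ℝ) (Φ : Ev n → Ev m) (v : Ev m) (xb : Ev n) : Ev n →L[ℝ] Ev n :=
  fderiv ℝ (gradL φ₀ Φ v) xb

/-- The Lagrange multiplier set `Λ_com(x̄)` of the composite optimization problem. -/
def LamCom (φ₀ : Ev n → ℝ) (Φ : Ev n → Ev m) (θ : CPWL m) (xb : Ev n) : Set (Ev m) :=
  {v | gradient φ₀ xb + adjD Φ xb v = 0 ∧ v ∈ θ.subdiff (Φ xb)}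

/-- Criticality of a multiplier in the composite optimization setting. -/
def IsCriticalCom (φ₀ : Ev n → ℝ) (Φ : Ev n → Ev m) (θ : CPWL m) (xb : Ev n) (v : Ev m) :
    Prop :=
  ∃ ξ : Ev n, ξ ≠ 0 ∧ ∃ w ∈ θ.Dsub (Φ xb) v (fderiv ℝ Φ xb ξ),
    HessOp φ₀ Φ v xb ξ + adjD Φ xb w = 0

/-- The solution map of the canonically perturbed KKT system of composite optimization. -/
def SKKT (φ₀ : Ev n → ℝ) (Φ : Ev n → Ev m) (θ : CPWL m) (p₁ : Ev n) (p₂ : Ev m) :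
    Set (Ev n × Ev m) :=
  {xv | gradient φ₀ xv.1 + adjD Φ xv.1 xv.2 = p₁ ∧ xv.2 ∈ θ.subdiff (Φ xv.1 + p₂)}

/-- `x̄` is a local minimizer of `φ₀ + θ∘Φ`. -/
def LocalMin (φ₀ : Ev n → ℝ) (Φ : Ev n → Ev m) (θ : CPWL m) (xb : Ev n) : Prop :=
  ∃ U ∈ 𝓝 xb, ∀ x ∈ U,
    ((φ₀ xb : ℝ) : EReal) + θ.eval (Φ xb) ≤ ((φ₀ x : ℝ) : EReal) + θ.eval (Φ x)

end Composite

section Calmness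

variable {n m : ℕ}

/-- Isolated calmness of a solution map at `((0,0), q0)`. -/
def IsolCalm (S : Ev n × Ev m → Set (Ev n × Ev m)) (q0 : Ev n × Ev m) : Prop :=
  ∃ c : ℝ, 0 ≤ c ∧ ∃ U ∈ 𝓝 (0 : Ev n × Ev m), ∃ V ∈ 𝓝 q0,
    ∀ p ∈ U, ∀ q ∈ S p ∩ V, ‖q - q0‖ ≤ c * (‖p.1‖ + ‖p.2‖)

/-- Robust isolated calmness of a solution map at `((0,0), q0)`. -/
def RobustIsolCalm (S : Ev n × Ev m → Set (Ev n × Ev m)) (q0 : Ev n × Ev m) : Prop :=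
  ∃ c : ℝ, 0 ≤ c ∧ ∃ U ∈ 𝓝 (0 : Ev n × Ev m), ∃ V ∈ 𝓝 q0,
    (∀ p ∈ U, ∀ q ∈ S p ∩ V, ‖q - q0‖ ≤ c * (‖p.1‖ + ‖p.2‖)) ∧
    (∀ p ∈ U, (S p ∩ V).Nonempty)

/-- The Lipschitz-like (Aubin) property of a solution map around `((0,0), q0)`. -/
def LipschitzLike (S : Ev n × Ev m → Set (Ev n × Ev m)) (q0 : Ev n × Ev m) : Prop :=
  ∃ c : ℝ, 0 ≤ c ∧ ∃ U ∈ 𝓝 (0 : Ev n × Ev m), ∃ V ∈ 𝓝 q0,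
    ∀ p ∈ U, ∀ p' ∈ U, ∀ q ∈ S p ∩ V, ∃ q' ∈ S p', ‖q - q'‖ ≤ c * ‖p - p'‖

end Calmness


section MyHelpers
open Asymptotics

lemma my_tendsto_smul_fderiv {E F : Type*} [NormedAddCommGroup E] [NormedSpace ℝ E]
    [NormedAddCommGroup F] [NormedSpace ℝ F] {g : E → F} {A : E →L[ℝ] F} {a : E}
    (hg : HasFDerivAt g A a) {q : ℕ → E} {c : ℕ → ℝ} {d : E}
    (hq : Tendsto q atTop (𝓝 a)) (hc : Tendsto (fun k => c k • (q k - a)) atTop (𝓝 d)) :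
    Tendsto (fun k => c k • (g (q k) - g a)) atTop (𝓝 (A d)) := by
  have hlo : (fun x' => g x' - g a - A (x' - a)) =o[𝓝 a] fun x' => x' - a := hg.isLittleO
  have h1 : (fun k => g (q k) - g a - A (q k - a)) =o[atTop] fun k => q k - a :=
    hlo.comp_tendsto hq
  have h2 : (fun k => c k • (g (q k) - g a - A (q k - a))) =o[atTop]
      fun k => c k • (q k - a) :=
    (isBigO_refl c atTop).smul_isLittleO h1
  have h3 : (fun k => c k • (q k - a)) =O[atTop] (fun _ => (1:ℝ)) := hc.isBigO_one ℝ
  have h4 : Tendsto (fun k => c k • (g (q k) - g a - A (q k - a))) atTop (𝓝 0) :=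
    isLittleO_one_iff ℝ |>.mp (h2.trans_isBigO h3)
  have h5 : Tendsto (fun k => A (c k • (q k - a))) atTop (𝓝 (A d)) :=
    (A.continuous.tendsto d).comp hc
  have h6 := h5.add h4
  rw [add_zero] at h6
  refine h6.congr fun k => ?_
  simp only [map_smul, map_sub, smul_sub]
  abel

/-- The adjoint operation as a continuous linear map (over `ℝ`). -/
def adjCLM (n m : ℕ) : (Ev n →L[ℝ] Ev m) →L[ℝ] (Ev m →L[ℝ] Ev n) :=
  LinearMap.mkContinuous
    { toFun := fun A => ContinuousLinearMap.adjoint A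
      map_add' := fun A B => by simp [map_add]
      map_smul' := fun c A => by
        simp [ContinuousLinearMap.adjoint.map_smulₛₗ] }
    1 (fun A => by simp)

lemma my_psihat {n m : ℕ} (f : Ev n → Ev n) (Φ : Ev n → Ev m) (xb : Ev n) (vb : Ev m)
    (hf : DifferentiableAt ℝ f xb) (hPhi2 : DifferentiableAt ℝ (fderiv ℝ Φ) xb) :
    ∃ L : Ev n × Ev m →L[ℝ] Ev n,
      HasFDerivAt (fun p : Ev n × Ev m => Psi f Φ p.1 p.2) L (xb, vb) ∧
      ∀ ξ η, L (ξ, η) = gradxPsi f Φ xb vb ξ + adjD Φ xb η := by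
  have hadj : DifferentiableAt ℝ (fun x => adjD Φ x) xb := by
    have : (fun x => adjD Φ x) = fun x => adjCLM n m (fderiv ℝ Φ x) := rfl
    rw [this]
    exact ((adjCLM n m).differentiableAt).comp xb hPhi2
  have hΨ : DifferentiableAt ℝ (fun p : Ev n × Ev m => Psi f Φ p.1 p.2) (xb, vb) := by
    have h1 : DifferentiableAt ℝ (fun p : Ev n × Ev m => f p.1) (xb, vb) :=
      hf.comp _ differentiableAt_fst
    have h2 : DifferentiableAt ℝ (fun p : Ev n × Ev m => adjD Φ p.1 p.2) (xb, vb) :=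
      have h3 : DifferentiableAt ℝ (fun p : Ev n × Ev m => adjD Φ p.1) (xb, vb) :=
        DifferentiableAt.comp (f := Prod.fst) (xb, vb) hadj differentiableAt_fst
      DifferentiableAt.clm_apply h3 differentiableAt_snd
    exact h1.add h2
  refine ⟨fderiv ℝ (fun p : Ev n × Ev m => Psi f Φ p.1 p.2) (xb, vb), hΨ.hasFDerivAt, ?_⟩
  set L := fderiv ℝ (fun p : Ev n × Ev m => Psi f Φ p.1 p.2) (xb, vb) with hLdef
  have hL : HasFDerivAt (fun p : Ev n × Ev m => Psi f Φ p.1 p.2) L (xb, vb) := hΨ.hasFDerivAt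
  have hpart1 : HasFDerivAt (fun x => Psi f Φ x vb)
      (L.comp (ContinuousLinearMap.inl ℝ (Ev n) (Ev m))) xb :=
    HasFDerivAt.comp (f := fun e : Ev n => (e, vb)) xb hL (hasFDerivAt_prodMk_left xb vb)
  have hgx : gradxPsi f Φ xb vb = L.comp (ContinuousLinearMap.inl ℝ (Ev n) (Ev m)) :=
    hpart1.fderiv
  have hpart2 : HasFDerivAt (fun v => Psi f Φ xb v)
      (L.comp (ContinuousLinearMap.inr ℝ (Ev n) (Ev m))) vb :=
    HasFDerivAt.comp (f := fun v : Ev m => (xb, v)) vb hL (hasFDerivAt_prodMk_right xb vb)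
  have hpart2' : HasFDerivAt (fun v : Ev m => f xb + adjD Φ xb v) (adjD Φ xb) vb :=
    ((adjD Φ xb).hasFDerivAt).const_add (f xb)
  have hadj2 : adjD Φ xb = L.comp (ContinuousLinearMap.inr ℝ (Ev n) (Ev m)) :=
    hpart2'.unique hpart2
  intro ξ η
  have : (ξ, η) = ((ξ, 0) : Ev n × Ev m) + (0, η) := by simp
  rw [this, map_add]
  congr 1
  · rw [hgx]; rfl
  · rw [hadj2]; rfl

end MyHelpers

set_option maxHeartbeats 2000000

/-- graphical-derivative characterization of isolated calmness of the solution
map for a general proper lsc convex function `θ`. -/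
theorem stmt12 {n m : ℕ} (θ : Ev m → EReal) (f : Ev n → Ev n) (Φ : Ev n → Ev m)
    (xb : Ev n) (vb : Ev m)
    (hbot : ∀ z, θ z ≠ ⊥) (hproper : ∃ z, θ z ≠ ⊤)
    (hlsc : LowerSemicontinuous θ)
    (hconv : ∀ x y : Ev m, ∀ t : ℝ, 0 ≤ t → t ≤ 1 →
      θ (t • x + (1 - t) • y) ≤ (t : EReal) * θ x + ((1 - t : ℝ) : EReal) * θ y)
    (hf : DifferentiableAt ℝ f xb) (hPhi : DifferentiableAt ℝ Φ xb)
    (hPhi2 : DifferentiableAt ℝ (fderiv ℝ Φ) xb)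
    (hvb : vb ∈ LamE f Φ θ xb) :
    (IsolCalm (fun p => SmapE f Φ θ p.1 p.2) (xb, vb) ↔
      ∀ (ξ : Ev n) (η : Ev m),
        gradxPsi f Φ xb vb ξ + adjD Φ xb η = 0 →
        η ∈ DsubE θ (Φ xb) vb (fderiv ℝ Φ xb ξ) → ξ = 0 ∧ η = 0) ∧
    (IsolCalm (fun p => SmapE f Φ θ p.1 p.2) (xb, vb) →
      ∃ V ∈ 𝓝 ((xb, vb) : Ev n × Ev m), SmapE f Φ θ 0 0 ∩ V = {(xb, vb)}) := by
  obtain ⟨L, hL, hLf⟩ := my_psihat f Φ xb vb hf hPhi2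
  have hPsi0 : Psi f Φ xb vb = 0 := hvb.1
  constructor
  · constructor
    · -- isolated calmness implies the injectivity condition
      intro hic ξ η hE hD
      obtain ⟨z0, c0, hzm0, _hcn0, hzt0, hcl0⟩ := hD
      -- upgrade to a sequence whose scaling factors tend to infinity
      have good : ∃ (z : ℕ → Ev m × Ev m) (c : ℕ → ℝ), (∀ k, z k ∈ gphE θ) ∧
          Tendsto z atTop (𝓝 (Φ xb, vb)) ∧
          Tendsto (fun k => c k • (z k - (Φ xb, vb))) atTop
            (𝓝 ((fderiv ℝ Φ xb ξ, η) : Ev m × Ev m)) ∧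
          Tendsto c atTop atTop := by
        by_cases h0 : ((fderiv ℝ Φ xb ξ, η) : Ev m × Ev m) = 0
        · refine ⟨fun _ => (Φ xb, vb), fun k => (k : ℝ) + 1, fun _ => hvb.2,
            tendsto_const_nhds, by simp [h0], ?_⟩
          exact tendsto_atTop_add_const_right _ 1 tendsto_natCast_atTop_atTop
        · refine ⟨z0, c0, hzm0, hzt0, hcl0, ?_⟩
          rw [tendsto_atTop]
          intro M
          set r := ‖((fderiv ℝ Φ xb ξ, η) : Ev m × Ev m)‖ with hr
          have hrpos : 0 < r := norm_pos_iff.mpr h0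
          have hM1 : (0:ℝ) < max M 1 := lt_of_lt_of_le zero_lt_one (le_max_right _ _)
          have h1 : ∀ᶠ k in atTop, r / 2 ≤ ‖c0 k • (z0 k - (Φ xb, vb))‖ :=
            hcl0.norm.eventually (eventually_ge_nhds (by linarith))
          have h2 : ∀ᶠ k in atTop, ‖z0 k - (Φ xb, vb)‖ ≤ r / (2 * max M 1) := by
            have ht : Tendsto (fun k => ‖z0 k - (Φ xb, vb)‖) atTop (𝓝 0) :=
              tendsto_iff_norm_sub_tendsto_zero.mp hzt0
            exact ht.eventually (eventually_le_nhds (by positivity))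
          filter_upwards [h1, h2] with k hk1 hk2
          have hnn := _hcn0 k
          rw [norm_smul, Real.norm_eq_abs, abs_of_nonneg hnn] at hk1
          have hkey : max M 1 ≤ c0 k := by
            by_contra hlt
            push_neg at hlt
            have hA : c0 k * ‖z0 k - (Φ xb, vb)‖ ≤ c0 k * (r / (2 * max M 1)) :=
              mul_le_mul_of_nonneg_left hk2 hnn
            have hB : c0 k * (r / (2 * max M 1)) < max M 1 * (r / (2 * max M 1)) :=
              mul_lt_mul_of_pos_right hlt (by positivity)
            have hC : max M 1 * (r / (2 * max M 1)) = r / 2 := by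
              field_simp
            linarith
          linarith [le_max_left M 1]
      obtain ⟨z, c, hzm, hzt, hcl, hct⟩ := good
      set t : ℕ → ℝ := fun k => (c k)⁻¹ with htdef
      set Xx : ℕ → Ev n := fun k => xb + t k • ξ with hXdef
      set Vv : ℕ → Ev m := fun k => (z k).2 with hVdef
      set Zz : ℕ → Ev m := fun k => (z k).1 with hZdef
      set P1 : ℕ → Ev n := fun k => Psi f Φ (Xx k) (Vv k) with hP1def
      set P2 : ℕ → Ev m := fun k => Zz k - Φ (Xx k) with hP2def
      have hev1 : ∀ᶠ k in atTop, 1 ≤ c k := hct.eventually_ge_atTop 1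
      have ht0 : Tendsto t atTop (𝓝 0) := hct.inv_tendsto_atTop
      have hXx : Tendsto Xx atTop (𝓝 xb) := by
        have h := (tendsto_const_nhds : Tendsto (fun _ : ℕ => xb) atTop (𝓝 xb)).add
          (ht0.smul_const ξ)
        simpa using h
      have hcx : Tendsto (fun k => c k • (Xx k - xb)) atTop (𝓝 ξ) := by
        apply Tendsto.congr' _ (tendsto_const_nhds : Tendsto (fun _ : ℕ => ξ) atTop (𝓝 ξ))
        filter_upwards [hev1] with k hk
        have hkne : c k ≠ 0 := by linarith
        simp only [hXdef, add_sub_cancel_left, smul_smul, htdef]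
        rw [mul_inv_cancel₀ hkne, one_smul]
      have hZz : Tendsto Zz atTop (𝓝 (Φ xb)) := (continuous_fst.tendsto _).comp hzt
      have hVv : Tendsto Vv atTop (𝓝 vb) := (continuous_snd.tendsto _).comp hzt
      have hcz : Tendsto (fun k => c k • (Zz k - Φ xb)) atTop (𝓝 (fderiv ℝ Φ xb ξ)) :=
        (continuous_fst.tendsto _).comp hcl
      have hcv : Tendsto (fun k => c k • (Vv k - vb)) atTop (𝓝 η) :=
        (continuous_snd.tendsto _).comp hcl
      have hcPhi : Tendsto (fun k => c k • (Φ (Xx k) - Φ xb)) atTop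
          (𝓝 (fderiv ℝ Φ xb ξ)) :=
        my_tendsto_smul_fderiv hPhi.hasFDerivAt hXx hcx
      have hcp2 : Tendsto (fun k => c k • P2 k) atTop (𝓝 0) := by
        have := hcz.sub hcPhi
        rw [sub_self] at this
        refine this.congr fun k => ?_
        rw [← smul_sub, sub_sub_sub_cancel_right]
      have hq : Tendsto (fun k => ((Xx k, Vv k) : Ev n × Ev m)) atTop (𝓝 (xb, vb)) :=
        hXx.prodMk_nhds hVv
      have hcq : Tendsto (fun k => c k • (((Xx k, Vv k) : Ev n × Ev m) - (xb, vb)))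
          atTop (𝓝 (ξ, η)) := hcx.prodMk_nhds hcv
      have hcp1 : Tendsto (fun k => c k • P1 k) atTop (𝓝 0) := by
        have h1 := my_tendsto_smul_fderiv hL hq hcq
        have h2 : L (ξ, η) = 0 := by rw [hLf]; exact hE
        rw [h2] at h1
        refine h1.congr fun k => ?_
        show c k • (P1 k - Psi f Φ xb vb) = c k • P1 k
        rw [hPsi0, sub_zero]
      have hp1 : Tendsto P1 atTop (𝓝 0) := by
        have h := ht0.smul hcp1
        rw [zero_smul] at h
        apply Tendsto.congr' _ h
        filter_upwards [hev1] with k hk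
        have hkne : c k ≠ 0 := by linarith
        rw [smul_smul, htdef, inv_mul_cancel₀ hkne, one_smul]
      have hp2 : Tendsto P2 atTop (𝓝 0) := by
        have h := ht0.smul hcp2
        rw [zero_smul] at h
        apply Tendsto.congr' _ h
        filter_upwards [hev1] with k hk
        have hkne : c k ≠ 0 := by linarith
        rw [smul_smul, htdef, inv_mul_cancel₀ hkne, one_smul]
      have hP : Tendsto (fun k => ((P1 k, P2 k) : Ev n × Ev m)) atTop (𝓝 0) := by
        have := hp1.prodMk_nhds hp2
        exact this
      have hmemS : ∀ k, ((Xx k, Vv k) : Ev n × Ev m) ∈ SmapE f Φ θ (P1 k) (P2 k) := by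
        intro k
        refine ⟨rfl, ?_⟩
        have heq : Φ (Xx k) + P2 k = Zz k := by
          show Φ (Xx k) + (Zz k - Φ (Xx k)) = Zz k
          rw [add_comm, sub_add_cancel]
        rw [heq]
        exact hzm k
      obtain ⟨c₀, hc₀, U, hU, V, hV, hb⟩ := hic
      have hfin : ∀ᶠ k in atTop,
          ‖c k • (((Xx k, Vv k) : Ev n × Ev m) - (xb, vb))‖ ≤
            c₀ * (‖c k • P1 k‖ + ‖c k • P2 k‖) := by
        filter_upwards [hP hU, hq hV, hev1] with k h1 h2 h3
        have hbk := hb (P1 k, P2 k) h1 (Xx k, Vv k) ⟨hmemS k, h2⟩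
        have hc0k : (0:ℝ) ≤ c k := le_trans zero_le_one h3
        calc ‖c k • (((Xx k, Vv k) : Ev n × Ev m) - (xb, vb))‖
            = c k * ‖((Xx k, Vv k) : Ev n × Ev m) - (xb, vb)‖ := by
              rw [norm_smul, Real.norm_eq_abs, abs_of_nonneg hc0k]
          _ ≤ c k * (c₀ * (‖P1 k‖ + ‖P2 k‖)) := mul_le_mul_of_nonneg_left hbk hc0k
          _ = c₀ * (c k * ‖P1 k‖ + c k * ‖P2 k‖) := by ring
          _ = c₀ * (‖c k • P1 k‖ + ‖c k • P2 k‖) := by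
              rw [norm_smul, norm_smul, Real.norm_eq_abs, abs_of_nonneg hc0k]
      have hlim2 : Tendsto (fun k => c₀ * (‖c k • P1 k‖ + ‖c k • P2 k‖)) atTop (𝓝 0) := by
        have := (hcp1.norm.add hcp2.norm).const_mul c₀
        simpa using this
      have hle : ‖((ξ, η) : Ev n × Ev m)‖ ≤ 0 := le_of_tendsto_of_tendsto hcq.norm hlim2 hfin
      have hzero : ((ξ, η) : Ev n × Ev m) = 0 := norm_le_zero_iff.mp hle
      exact ⟨congrArg Prod.fst hzero, congrArg Prod.snd hzero⟩
    · -- the injectivity condition implies isolated calmness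
      intro hcond
      by_contra hnc
      simp only [IsolCalm, not_exists, not_and] at hnc
      push_neg at hnc
      have key : ∀ k : ℕ, ∃ (p q : Ev n × Ev m), ‖p‖ < 1 / (k + 1) ∧
          q ∈ SmapE f Φ θ p.1 p.2 ∧ ‖q - (xb, vb)‖ < 1 / (k + 1) ∧
          (k : ℝ) * (‖p.1‖ + ‖p.2‖) < ‖q - (xb, vb)‖ := by
        intro k
        obtain ⟨p, hp, q, hq, hlt⟩ := hnc k (Nat.cast_nonneg k)
          (Metric.ball 0 (1 / (k + 1))) (Metric.ball_mem_nhds _ (by positivity))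
          (Metric.ball (xb, vb) (1 / (k + 1))) (Metric.ball_mem_nhds _ (by positivity))
        refine ⟨p, q, ?_, hq.1, ?_, hlt⟩
        · simpa [mem_ball_zero_iff] using hp
        · simpa [mem_ball_iff_norm, dist_eq_norm] using hq.2
      choose p q hp hqS hqB hqlt using key
      have hpos : ∀ k, 0 < ‖q k - (xb, vb)‖ := fun k =>
        lt_of_le_of_lt (by positivity) (hqlt k)
      set c : ℕ → ℝ := fun k => ‖q k - (xb, vb)‖⁻¹ with hcdef
      have hcpos : ∀ k, 0 < c k := fun k => inv_pos.mpr (hpos k)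
      have hmem : ∀ k, c k • (q k - (xb, vb)) ∈ Metric.sphere (0 : Ev n × Ev m) 1 := by
        intro k
        rw [mem_sphere_zero_iff_norm, norm_smul, Real.norm_eq_abs,
          abs_of_pos (hcpos k)]
        exact inv_mul_cancel₀ (hpos k).ne'
      obtain ⟨w, hw, φ, hφ, hwt⟩ :=
        (isCompact_sphere (0 : Ev n × Ev m) 1).tendsto_subseq hmem
      have hφk : ∀ k : ℕ, (k : ℝ) ≤ (φ k : ℝ) := fun k => Nat.cast_le.mpr hφ.le_apply
      have hqtend : Tendsto (fun k => q (φ k)) atTop (𝓝 (xb, vb)) := by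
        rw [tendsto_iff_norm_sub_tendsto_zero]
        refine squeeze_zero (fun k => norm_nonneg _) (fun k => ?_)
          tendsto_one_div_add_atTop_nhds_zero_nat
        refine le_trans (hqB (φ k)).le ?_
        apply one_div_le_one_div_of_le (by positivity)
        linarith [hφk k]
      have hwt' : Tendsto (fun k => c (φ k) • (q (φ k) - (xb, vb))) atTop (𝓝 w) := hwt
      have hcsum : Tendsto (fun k => c (φ k) * (‖(p (φ k)).1‖ + ‖(p (φ k)).2‖))
          atTop (𝓝 0) := by
        refine squeeze_zero' (Filter.Eventually.of_forall fun k => by positivity) ?_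
          tendsto_one_div_atTop_nhds_zero_nat
        filter_upwards [eventually_ge_atTop 1] with k hk
        have hφpos : (0 : ℝ) < (φ k : ℝ) := lt_of_lt_of_le (by exact_mod_cast hk) (hφk k)
        show ‖q (φ k) - (xb, vb)‖⁻¹ * (‖(p (φ k)).1‖ + ‖(p (φ k)).2‖) ≤ 1 / (k : ℝ)
        rw [inv_mul_eq_div, div_le_div_iff₀ (hpos (φ k)) (by positivity)]
        calc (‖(p (φ k)).1‖ + ‖(p (φ k)).2‖) * (k : ℝ)
            ≤ (‖(p (φ k)).1‖ + ‖(p (φ k)).2‖) * (φ k : ℝ) := by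
              apply mul_le_mul_of_nonneg_left (hφk k) (by positivity)
          _ ≤ 1 * ‖q (φ k) - (xb, vb)‖ := by rw [one_mul]; nlinarith [hqlt (φ k)]
      have hcp1 : Tendsto (fun k => c (φ k) • (p (φ k)).1) atTop (𝓝 0) := by
        apply squeeze_zero_norm _ hcsum
        intro k
        rw [norm_smul, Real.norm_eq_abs, abs_of_pos (hcpos (φ k))]
        have : ‖(p (φ k)).1‖ ≤ ‖(p (φ k)).1‖ + ‖(p (φ k)).2‖ :=
          le_add_of_nonneg_right (norm_nonneg _)
        exact mul_le_mul_of_nonneg_left this (hcpos (φ k)).le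
      have hcp2 : Tendsto (fun k => c (φ k) • (p (φ k)).2) atTop (𝓝 0) := by
        apply squeeze_zero_norm _ hcsum
        intro k
        rw [norm_smul, Real.norm_eq_abs, abs_of_pos (hcpos (φ k))]
        have : ‖(p (φ k)).2‖ ≤ ‖(p (φ k)).1‖ + ‖(p (φ k)).2‖ :=
          le_add_of_nonneg_left (norm_nonneg _)
        exact mul_le_mul_of_nonneg_left this (hcpos (φ k)).le
      have hp2tend : Tendsto (fun k => (p (φ k)).2) atTop (𝓝 0) := by
        refine squeeze_zero_norm (fun k => ?_) tendsto_one_div_add_atTop_nhds_zero_nat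
        refine le_trans (norm_snd_le (p (φ k))) (le_trans (hp (φ k)).le ?_)
        apply one_div_le_one_div_of_le (by positivity)
        linarith [hφk k]
      have hX : Tendsto (fun k => (q (φ k)).1) atTop (𝓝 xb) :=
        (continuous_fst.tendsto _).comp hqtend
      have hV : Tendsto (fun k => (q (φ k)).2) atTop (𝓝 vb) :=
        (continuous_snd.tendsto _).comp hqtend
      have hCX : Tendsto (fun k => c (φ k) • ((q (φ k)).1 - xb)) atTop (𝓝 w.1) :=
        (continuous_fst.tendsto _).comp hwt'
      have hCV : Tendsto (fun k => c (φ k) • ((q (φ k)).2 - vb)) atTop (𝓝 w.2) :=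
        (continuous_snd.tendsto _).comp hwt'
      -- tangent membership
      have htan : w.2 ∈ DsubE θ (Φ xb) vb (fderiv ℝ Φ xb w.1) := by
        refine ⟨fun k => (Φ ((q (φ k)).1) + (p (φ k)).2, (q (φ k)).2), fun k => c (φ k),
          fun k => (hqS (φ k)).2, fun k => (hcpos (φ k)).le, ?_, ?_⟩
        · have h1 : Tendsto (fun k => Φ ((q (φ k)).1) + (p (φ k)).2) atTop (𝓝 (Φ xb)) := by
            have := ((hPhi.continuousAt.tendsto).comp hX).add hp2tend
            simpa using this
          exact h1.prodMk_nhds hV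
        · have h1 : Tendsto (fun k => c (φ k) • (Φ ((q (φ k)).1) + (p (φ k)).2 - Φ xb))
              atTop (𝓝 (fderiv ℝ Φ xb w.1)) := by
            have h2 := my_tendsto_smul_fderiv hPhi.hasFDerivAt hX hCX
            have h3 := h2.add hcp2
            rw [add_zero] at h3
            refine h3.congr fun k => ?_
            rw [← smul_add]
            congr 1
            abel
          exact h1.prodMk_nhds hCV
      -- linearized equation
      have heq : gradxPsi f Φ xb vb w.1 + adjD Φ xb w.2 = 0 := by
        have h1 := my_tendsto_smul_fderiv hL hqtend hwt'
        have h2 : Tendsto (fun k => c (φ k) •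
            ((fun pp : Ev n × Ev m => Psi f Φ pp.1 pp.2) (q (φ k)) -
              (fun pp : Ev n × Ev m => Psi f Φ pp.1 pp.2) (xb, vb))) atTop (𝓝 0) := by
          refine hcp1.congr fun k => ?_
          show c (φ k) • (p (φ k)).1 = c (φ k) • (Psi f Φ (q (φ k)).1 (q (φ k)).2 - Psi f Φ xb vb)
          rw [hPsi0, sub_zero, (hqS (φ k)).1]
        have h3 : L w = 0 := tendsto_nhds_unique h1 h2
        rw [← hLf w.1 w.2]
        exact h3
      obtain ⟨h1, h2⟩ := hcond w.1 w.2 heq htan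
      have hw0 : w = 0 := Prod.ext h1 h2
      rw [hw0, mem_sphere_zero_iff_norm, norm_zero] at hw
      exact zero_ne_one hw
  · -- moreover: isolated solution
    intro hic
    obtain ⟨c₀, hc₀, U, hU, V, hV, hb⟩ := hic
    refine ⟨V, hV, Set.eq_singleton_iff_unique_mem.mpr ⟨⟨⟨hPsi0, by simpa using hvb.2⟩,
      mem_of_mem_nhds hV⟩, fun q hq => ?_⟩⟩
    have hb0 := hb 0 (mem_of_mem_nhds hU) q hq
    simp only [Prod.fst_zero, Prod.snd_zero, norm_zero, add_zero, mul_zero] at hb0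
    have : q - (xb, vb) = 0 := norm_le_zero_iff.mp hb0
    exact sub_eq_zero.mp this
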